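/- Let U = U_1 × ... × U_m with U_1, ..., U_m pairwise disjoint finite sets, and let C ⊆ U. Partition C into sets C_1, ..., C_{n_1} according to the first component, where n_1 = |U_1|. Assign a variable x_u to every element u of U_2 ∪ ... ∪ U_m and introduce an extra variable z. For a tuple v = (u_1, ..., u_m), let π(v) = x_{u_2} ··· x_{u_m}. Define F(C, z) = ∏_{j=1}^{n_1} (1 + Σ_{v ∈ C_j} z·π(v)). Then C contains k tuples that are pairwise disjoint (no two share a component in any coordinate) if and only if the sum-product expansion of F(C,z) contains a monomial of the form z^k · π where π is a multilinear monomial of degree (m-1)k in the x-variables. -/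

import Mathlib

open MvPolynomial Finset

lemma prodX_eq {V : Type*} [DecidableEq V] {m : ℕ} (g : Fin m → V) (t : Finset (Fin m)) :
    (∏ i ∈ t, (MvPolynomial.X (some (g i)) : MvPolynomial (Option V) ℚ)) =
      MvPolynomial.monomial (∑ i ∈ t, Finsupp.single (some (g i)) 1) 1 := by
  induction t using Finset.induction_on with
  | empty => simp
  | insert _ _ ha ih =>
    rw [Finset.prod_insert ha, ih, Finset.sum_insert ha, X, monomial_mul, one_mul]

lemma expand_key {V : Type*} [DecidableEq V] {m : ℕ} (i0 : Fin m)
    (E : (Fin m → V) → (Option V →₀ ℕ)) (C : Finset (Fin m → V)) (s : Finset V) :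
    (∏ u ∈ s, (1 + ∑ f ∈ C.filter (fun f => f i0 = u),
        (MvPolynomial.monomial (E f) (1 : ℚ)))) =
    ∑ M ∈ (C.filter (fun f => f i0 ∈ s)).powerset.filter
        (fun M => ∀ f ∈ M, ∀ g ∈ M, f i0 = g i0 → f = g),
      MvPolynomial.monomial (∑ f ∈ M, E f) (1 : ℚ) := by
  induction s using Finset.induction_on with
  | empty =>
    rw [Finset.filter_true_of_mem (by simp)]
    simp
  | @insert a s ha ih =>
    rw [Finset.prod_insert ha, ih, add_mul, one_mul, Finset.sum_mul]
    simp only [Finset.mul_sum, monomial_mul, one_mul]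
    rw [← Finset.sum_filter_add_sum_filter_not
      ((C.filter (fun f => f i0 ∈ insert a s)).powerset.filter
        (fun M => ∀ f ∈ M, ∀ g ∈ M, f i0 = g i0 → f = g))
      (fun M => ∀ f ∈ M, f i0 ≠ a)]
    congr 1
    · apply Finset.sum_congr _ (fun _ _ => rfl)
      ext M
      constructor
      · intro hM
        obtain ⟨hMp, hinj⟩ := Finset.mem_filter.mp hM
        have hMsub := Finset.mem_powerset.mp hMp
        refine Finset.mem_filter.mpr ⟨Finset.mem_filter.mpr
          ⟨Finset.mem_powerset.mpr (fun f hf => ?_), hinj⟩, fun f hf => ?_⟩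
        · obtain ⟨h1, h2⟩ := Finset.mem_filter.mp (hMsub hf)
          exact Finset.mem_filter.mpr ⟨h1, Finset.mem_insert.mpr (Or.inr h2)⟩
        · obtain ⟨h1, h2⟩ := Finset.mem_filter.mp (hMsub hf)
          exact fun he => ha (he ▸ h2)
      · intro hM
        obtain ⟨hM1, hna⟩ := Finset.mem_filter.mp hM
        obtain ⟨hMp, hinj⟩ := Finset.mem_filter.mp hM1
        have hMsub := Finset.mem_powerset.mp hMp
        refine Finset.mem_filter.mpr ⟨Finset.mem_powerset.mpr (fun f hf => ?_), hinj⟩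
        obtain ⟨h1, h2⟩ := Finset.mem_filter.mp (hMsub hf)
        rcases Finset.mem_insert.mp h2 with h | h
        · exact absurd h (hna f hf)
        · exact Finset.mem_filter.mpr ⟨h1, h⟩
    · rw [← Finset.sum_product']
      refine Finset.sum_bij (fun p _ => insert p.1 p.2) ?_ ?_ ?_ ?_
      · rintro ⟨f, M⟩ hp
        obtain ⟨hf1, hM1⟩ := Finset.mem_product.mp hp
        obtain ⟨hfC, hfa⟩ := Finset.mem_filter.mp hf1
        obtain ⟨hMp, hinj⟩ := Finset.mem_filter.mp hM1
        have hMsub := Finset.mem_powerset.mp hMp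
        have hfs : ∀ g ∈ M, g i0 ∈ s := fun g hg => (Finset.mem_filter.mp (hMsub hg)).2
        refine Finset.mem_filter.mpr ⟨Finset.mem_filter.mpr
          ⟨Finset.mem_powerset.mpr (fun g hg => ?_), ?_⟩, ?_⟩
        · rcases Finset.mem_insert.mp hg with rfl | hg
          · exact Finset.mem_filter.mpr ⟨hfC, Finset.mem_insert.mpr (Or.inl hfa)⟩
          · have h1 := Finset.mem_filter.mp ((Finset.mem_powerset.mp hMp) hg)
            exact Finset.mem_filter.mpr ⟨h1.1, Finset.mem_insert.mpr (Or.inr h1.2)⟩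
        · intro g hg g' hg' he
          rcases Finset.mem_insert.mp hg with rfl | hg <;>
            rcases Finset.mem_insert.mp hg' with rfl | hg'
          · rfl
          · exact absurd (hfa ▸ he.symm : g' i0 = a) (fun hh => ha (hh ▸ hfs g' hg'))
          · exact absurd (hfa ▸ he : g i0 = a) (fun hh => ha (hh ▸ hfs g hg))
          · exact hinj g hg g' hg' he
        · intro hQ
          exact (hQ f (Finset.mem_insert_self f M)) hfa
      · rintro ⟨f, M⟩ hp ⟨f', M'⟩ hp' he
        obtain ⟨hf1, hM1⟩ := Finset.mem_product.mp hp
        obtain ⟨hf1', hM1'⟩ := Finset.mem_product.mp hp'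
        obtain ⟨hfC, hfa⟩ := Finset.mem_filter.mp hf1
        obtain ⟨hfC', hfa'⟩ := Finset.mem_filter.mp hf1'
        have hMsub := Finset.mem_powerset.mp (Finset.mem_filter.mp hM1).1
        have hMsub' := Finset.mem_powerset.mp (Finset.mem_filter.mp hM1').1
        have hfM : f ∉ M := fun hf => ha (hfa ▸ (Finset.mem_filter.mp (hMsub hf)).2)
        have hfM' : f' ∉ M' := fun hf => ha (hfa' ▸ (Finset.mem_filter.mp (hMsub' hf)).2)
        simp only at he
        have hff' : f = f' := by
          have hmem : f ∈ insert f' M' := he ▸ Finset.mem_insert_self f M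
          rcases Finset.mem_insert.mp hmem with h | h
          · exact h
          · exact absurd (hfa ▸ (Finset.mem_filter.mp (hMsub' h)).2 : a ∈ s) ha
        subst hff'
        have hMM : M = M' := by
          rw [← Finset.erase_insert hfM, ← Finset.erase_insert hfM', he]
        rw [hMM]
      · intro M' hM'
        obtain ⟨hM1, hQ⟩ := Finset.mem_filter.mp hM'
        obtain ⟨hMp, hinj⟩ := Finset.mem_filter.mp hM1
        have hMsub := Finset.mem_powerset.mp hMp
        push_neg at hQ
        obtain ⟨f, hfM, hfa⟩ := hQ
        refine ⟨⟨f, M'.erase f⟩, ?_, Finset.insert_erase hfM⟩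
        refine Finset.mem_product.mpr ⟨Finset.mem_filter.mpr
          ⟨(Finset.mem_filter.mp (hMsub hfM)).1, hfa⟩, Finset.mem_filter.mpr
          ⟨Finset.mem_powerset.mpr (fun g hg => ?_),
           fun g hg g' hg' => hinj g (Finset.mem_of_mem_erase hg) g' (Finset.mem_of_mem_erase hg')⟩⟩
        have hgM := Finset.mem_of_mem_erase hg
        obtain ⟨h1, h2⟩ := Finset.mem_filter.mp (hMsub hgM)
        refine Finset.mem_filter.mpr ⟨h1, ?_⟩
        rcases Finset.mem_insert.mp h2 with h | h
        · exact absurd (hinj g hgM f hfM (h.trans hfa.symm)) (Finset.ne_of_mem_erase hg)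
        · exact h
      · rintro ⟨f, M⟩ hp
        obtain ⟨hf1, hM1⟩ := Finset.mem_product.mp hp
        obtain ⟨hfC, hfa⟩ := Finset.mem_filter.mp hf1
        have hMsub := Finset.mem_powerset.mp (Finset.mem_filter.mp hM1).1
        have hfM : f ∉ M := fun hf => ha (hfa ▸ (Finset.mem_filter.mp (hMsub hf)).2)
        simp only
        rw [Finset.sum_insert hfM]

lemma sum_monomial_support {σ : Type*} [DecidableEq σ] {α : Type*} [DecidableEq α]
    (A : Finset α) (D : α → (σ →₀ ℕ)) (d : σ →₀ ℕ) :
    d ∈ (∑ M ∈ A, (MvPolynomial.monomial (D M) (1:ℚ))).support ↔ ∃ M ∈ A, D M = d := by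
  rw [MvPolynomial.mem_support_iff, MvPolynomial.coeff_sum]
  simp only [MvPolynomial.coeff_monomial, Finset.sum_boole, ne_eq, Nat.cast_eq_zero,
    Finset.card_eq_zero, Finset.filter_eq_empty_iff]
  push_neg
  rfl

theorem stmt_11 (V : Type*) [Fintype V] [DecidableEq V] (m k : ℕ) (hm : 0 < m)
    (U : Fin m → Finset V)
    (hU : ∀ i j : Fin m, i ≠ j → Disjoint (U i) (U j))
    (C : Finset (Fin m → V)) (hC : ∀ f ∈ C, ∀ i : Fin m, f i ∈ U i) :
    (∃ M ⊆ C, M.card = k ∧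
        ∀ f ∈ M, ∀ g ∈ M, f ≠ g → ∀ i : Fin m, f i ≠ g i) ↔
    ∃ d ∈ (∏ u ∈ U ⟨0, hm⟩,
        (1 + ∑ f ∈ C.filter (fun f => f ⟨0, hm⟩ = u),
          MvPolynomial.X (none : Option V) *
            ∏ i ∈ Finset.univ.filter (fun i : Fin m => i ≠ ⟨0, hm⟩),
              MvPolynomial.X (some (f i)) : MvPolynomial (Option V) ℚ)).support,
      d none = k ∧ (∀ u : V, d (some u) ≤ 1) ∧
        (∑ u : V, d (some u)) = (m - 1) * k := by
  set i0 : Fin m := ⟨0, hm⟩ with hi0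
  set t : Finset (Fin m) := Finset.univ.filter (fun i : Fin m => i ≠ i0) with ht
  set E : (Fin m → V) → (Option V →₀ ℕ) :=
    fun f => Finsupp.single none 1 + ∑ i ∈ t, Finsupp.single (some (f i)) 1 with hE
  have h1 : ∀ f : Fin m → V,
      (MvPolynomial.X (none : Option V) * ∏ i ∈ t, MvPolynomial.X (some (f i))
        : MvPolynomial (Option V) ℚ) = MvPolynomial.monomial (E f) 1 := by
    intro f
    rw [prodX_eq, X, monomial_mul, one_mul, hE]
  have hCfilter : C.filter (fun f => f i0 ∈ U i0) = C :=
    Finset.filter_true_of_mem (fun f hf => hC f hf i0)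
  simp only [h1]
  rw [expand_key i0 E C (U i0), hCfilter]
  -- basic facts about E
  have hEnone : ∀ f : Fin m → V, E f none = 1 := by
    intro f
    rw [hE]
    simp [Finsupp.single_apply, Finset.sum_apply']
  have hEsome : ∀ (f : Fin m → V) (u : V),
      E f (some u) = ∑ i ∈ t, if f i = u then 1 else 0 := by
    intro f u
    rw [hE]
    simp only [Finsupp.add_apply, Finsupp.single_apply, Finset.sum_apply']
    simp
  have hcard_t : t.card = m - 1 := by
    rw [ht, Finset.filter_ne', Finset.card_erase_of_mem (Finset.mem_univ i0)]
    simp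
  constructor
  · rintro ⟨M, hMC, hMk, hdisj⟩
    have hpair : ∀ f ∈ M, ∀ g ∈ M, ∀ i ∈ t, ∀ j ∈ t, f i = g j → f = g ∧ i = j := by
      intro f hf g hg i hi j hj he
      have hij : i = j := by
        by_contra hne
        exact (Finset.disjoint_left.mp (hU i j hne)) (hC f (hMC hf) i) (he ▸ hC g (hMC hg) j)
      subst hij
      refine ⟨?_, rfl⟩
      by_contra hne
      exact hdisj f hf g hg hne i he
    have hP : ∀ f ∈ M, ∀ g ∈ M, f i0 = g i0 → f = g := by
      intro f hf g hg he
      by_contra hne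
      exact hdisj f hf g hg hne i0 he
    refine ⟨∑ f ∈ M, E f, (sum_monomial_support _ _ _).mpr
      ⟨M, by simp only [Finset.mem_filter, Finset.mem_powerset]; exact ⟨hMC, hP⟩, rfl⟩,
      ?_, ?_, ?_⟩
    · rw [Finset.sum_apply']
      simp [hEnone, hMk]
    · intro u
      rw [Finset.sum_apply']
      simp only [hEsome]
      rw [← Finset.sum_product', ← Finset.card_filter]
      apply Finset.card_le_one.mpr
      rintro ⟨f, i⟩ hp ⟨g, j⟩ hq
      obtain ⟨hp1, hp2⟩ := Finset.mem_filter.mp hp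
      obtain ⟨hq1, hq2⟩ := Finset.mem_filter.mp hq
      obtain ⟨hfM, hit⟩ := Finset.mem_product.mp hp1
      obtain ⟨hgM, hjt⟩ := Finset.mem_product.mp hq1
      obtain ⟨h1, h2⟩ := hpair f hfM g hgM i hit j hjt (hp2.trans hq2.symm)
      simp [h1, h2]
    · simp only [Finset.sum_apply', hEsome]
      rw [Finset.sum_comm]
      have hinner : ∀ f ∈ M, (∑ u : V, ∑ i ∈ t, if f i = u then 1 else 0) = t.card := by
        intro f _
        rw [Finset.sum_comm]
        have hone : ∀ i ∈ t, (∑ u : V, if f i = u then 1 else 0) = 1 := fun i _ => by simp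
        rw [Finset.sum_congr rfl hone, Finset.sum_const, smul_eq_mul, mul_one]
      rw [Finset.sum_congr rfl hinner, Finset.sum_const, smul_eq_mul, hMk, hcard_t, mul_comm]
  · rintro ⟨d, hd, hdk, hd1, -⟩
    obtain ⟨M, hMA, hDM⟩ := (sum_monomial_support _ _ _).mp hd
    simp only [Finset.mem_filter, Finset.mem_powerset] at hMA
    obtain ⟨hMC, hinj⟩ := hMA
    refine ⟨M, hMC, ?_, ?_⟩
    · have h2 : (∑ f ∈ M, E f) none = k := by rw [hDM]; exact hdk
      rw [Finset.sum_apply'] at h2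
      simpa [hEnone] using h2
    · intro f hf g hg hne i he
      by_cases hii : i = i0
      · exact hne (hinj f hf g hg (hii ▸ he))
      · have hit : i ∈ t := Finset.mem_filter.mpr ⟨Finset.mem_univ i, hii⟩
        have h2 : 2 ≤ d (some (f i)) := by
          rw [← hDM, Finset.sum_apply']
          have hfg : ({f, g} : Finset (Fin m → V)) ⊆ M := by
            intro x hx
            rcases Finset.mem_insert.mp hx with rfl | hx
            · exact hf
            · exact (Finset.mem_singleton.mp hx) ▸ hg
          have hle := Finset.sum_le_sum_of_subset (f := fun f' => E f' (some (f i))) hfg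
          rw [Finset.sum_pair hne] at hle
          refine le_trans ?_ hle
          have hf1 : 1 ≤ E f (some (f i)) := by
            rw [hEsome]
            have := Finset.single_le_sum (f := fun i' => if f i' = f i then 1 else 0)
              (fun i' _ => Nat.zero_le _) hit
            simpa using this
          have hg1 : 1 ≤ E g (some (f i)) := by
            rw [hEsome]
            have := Finset.single_le_sum (f := fun i' => if g i' = f i then 1 else 0)
              (fun i' _ => Nat.zero_le _) hit
            simpa [he.symm] using this
          omega
        have := hd1 (f i)
        omega
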